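/- Let R > 0 and 0 < δ < 1 be real numbers, and let a : ℝ → ℝ satisfy a'(t) = R · a(t) · (a(t) - δ) · (1 - a(t)) for all t ≥ 0 (in the sense of HasDerivAt), with δ < a(0) < 1. Then a(t) tends to 1 as t → ∞ (Tendsto a atTop (𝓝 1)). -/

import Mathlib

open Filter Topology

/-- If `g' = c·g` on `[0,∞)` with `c` continuous at points of `[0,∞)` and `g 0 > 0`,
then `g > 0` on `[0,∞)`. -/
lemma pos_of_linear_ode_aux (c g : ℝ → ℝ)
    (hc : ∀ t : ℝ, 0 ≤ t → ContinuousAt c t)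
    (hg : ∀ t : ℝ, 0 ≤ t → HasDerivAt g (c t * g t) t)
    (h0 : 0 < g 0) : ∀ t : ℝ, 0 ≤ t → 0 < g t := by
  set c' : ℝ → ℝ := fun t => c (max t 0) with hc'def
  have hc' : Continuous c' := by
    rw [continuous_iff_continuousAt]
    intro t
    have hm : ContinuousAt (fun s : ℝ => max s 0) t :=
      (continuous_id.max continuous_const).continuousAt
    have : ContinuousAt (c ∘ fun s : ℝ => max s 0) t :=
      ContinuousAt.comp (hc _ (le_max_right t 0)) hm
    exact this
  set C : ℝ → ℝ := fun u => ∫ s in (0:ℝ)..u, c' s with hCdef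
  have hC : ∀ t : ℝ, HasDerivAt C (c' t) t := by
    intro t
    exact intervalIntegral.integral_hasDerivAt_right
      (hc'.intervalIntegrable 0 t)
      hc'.aestronglyMeasurable.stronglyMeasurableAtFilter
      hc'.continuousAt
  set φ : ℝ → ℝ := fun t => g t * Real.exp (-C t) with hφdef
  have hφ : ∀ t : ℝ, 0 ≤ t → HasDerivAt φ 0 t := by
    intro t ht
    have h1 : HasDerivAt φ
        (c t * g t * Real.exp (-C t) + g t * (Real.exp (-C t) * -(c' t))) t :=
      (hg t ht).mul (((hC t).neg).exp)
    have : c' t = c t := by simp [hc'def, max_eq_left ht]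
    convert h1 using 1
    rw [this]; ring
  have hconst : ∀ t : ℝ, 0 ≤ t → φ t = φ 0 := by
    intro t ht
    rcases eq_or_lt_of_le ht with h | h
    · rw [← h]
    · have hcont : ContinuousOn φ (Set.Icc 0 t) := fun x hx =>
        ((hφ x hx.1).continuousAt).continuousWithinAt
      have := constant_of_has_deriv_right_zero hcont
        (fun x hx => ((hφ x hx.1).hasDerivWithinAt))
      exact this t ⟨ht, le_refl t⟩
  intro t ht
  have h1 : φ t = φ 0 := hconst t ht
  have h2 : φ 0 = g 0 * Real.exp (-C 0) := rfl
  have h3 : 0 < φ t := by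
    rw [h1, h2]
    positivity
  have h4 : g t = φ t * Real.exp (C t) := by
    simp [hφdef, mul_assoc, ← Real.exp_add]
  rw [h4]
  positivity

theorem Dgate_converges_to_one
    (R δ : ℝ) (hR : 0 < R) (hδ0 : 0 < δ) (hδ1 : δ < 1)
    (a : ℝ → ℝ)
    (ha : ∀ t : ℝ, 0 ≤ t → HasDerivAt a (R * a t * (a t - δ) * (1 - a t)) t)
    (h0 : δ < a 0) (h0' : a 0 < 1) :
    Tendsto a atTop (𝓝 1) := by
  have hacont : ∀ t : ℝ, 0 ≤ t → ContinuousAt a t := fun t ht => (ha t ht).continuousAt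
  -- a t < 1 on [0,∞)
  have hlt1 : ∀ t : ℝ, 0 ≤ t → a t < 1 := by
    have := pos_of_linear_ode_aux (fun t => -(R * a t * (a t - δ))) (fun t => 1 - a t)
      (fun t ht => ((((continuousAt_const.mul (hacont t ht)).mul
        ((hacont t ht).sub continuousAt_const))).neg))
      (fun t ht => by
        have h := (hasDerivAt_const t (1:ℝ)).sub (ha t ht)
        exact h.congr_deriv (by ring))
      (by linarith)
    intro t ht; have h := this t ht; linarith
  -- δ < a t on [0,∞)
  have hgtδ : ∀ t : ℝ, 0 ≤ t → δ < a t := by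
    have := pos_of_linear_ode_aux (fun t => R * a t * (1 - a t)) (fun t => a t - δ)
      (fun t ht => ((continuousAt_const.mul (hacont t ht)).mul
        (continuousAt_const.sub (hacont t ht))))
      (fun t ht => by
        have h := (ha t ht).sub (hasDerivAt_const t δ)
        exact h.congr_deriv (by ring))
      (by linarith)
    intro t ht; have h := this t ht; linarith
  -- derivative is positive on [0,∞)
  have hdpos : ∀ t : ℝ, 0 ≤ t → 0 < R * a t * (a t - δ) * (1 - a t) := by
    intro t ht
    have h1 := hgtδ t ht; have h2 := hlt1 t ht
    have : 0 < a t := lt_trans hδ0 h1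
    have : 0 < a t - δ := by linarith
    have : 0 < 1 - a t := by linarith
    positivity
  -- strictly monotone on [0,∞)
  have hmono : StrictMonoOn a (Set.Ici 0) := by
    apply strictMonoOn_of_deriv_pos (convex_Ici 0)
    · exact fun x hx => (hacont x hx).continuousWithinAt
    · intro x hx
      rw [interior_Ici] at hx
      rw [(ha x hx.le).deriv]
      exact hdpos x hx.le
  set b : ℝ → ℝ := fun t => a (max t 0) with hbdef
  have hbmono : Monotone b := fun s t hst =>
    hmono.monotoneOn (Set.mem_Ici.2 (le_max_right _ _)) (Set.mem_Ici.2 (le_max_right _ _)) (max_le_max hst le_rfl)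
  have hbbdd : BddAbove (Set.range b) :=
    ⟨1, by rintro x ⟨t, rfl⟩; exact (hlt1 _ (le_max_right _ _)).le⟩
  set L : ℝ := ⨆ t, b t with hLdef
  have hbL : Tendsto b atTop (𝓝 L) := tendsto_atTop_ciSup hbmono hbbdd
  have haL : Tendsto a atTop (𝓝 L) := by
    apply hbL.congr'
    filter_upwards [eventually_ge_atTop (0:ℝ)] with t ht
    simp [hbdef, max_eq_left ht]
  have hLle1 : L ≤ 1 := ciSup_le fun t => (hlt1 _ (le_max_right _ _)).le
  have hδL : δ < L := by
    have hb0 : b 0 ≤ L := le_ciSup hbbdd 0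
    have : b 0 = a 0 := by simp [hbdef]
    linarith
  have hL1 : L = 1 := by
    by_contra hne
    have hlt : L < 1 := lt_of_le_of_ne hLle1 hne
    set m : ℝ := R * L * (L - δ) * (1 - L) with hmdef
    have hm : 0 < m := by
      have h1 : 0 < L := lt_trans hδ0 hδL
      have h2 : 0 < L - δ := by linarith
      have h3 : 0 < 1 - L := by linarith
      positivity
    have hfc : Continuous (fun x : ℝ => R * x * (x - δ) * (1 - x)) := by continuity
    have hf : Tendsto (fun t => R * a t * (a t - δ) * (1 - a t)) atTop (𝓝 m) := by
      have := (hfc.tendsto L).comp haL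
      exact this
    have hev : ∀ᶠ t in atTop, m / 2 ≤ R * a t * (a t - δ) * (1 - a t) :=
      hf.eventually (eventually_ge_nhds (by linarith : m / 2 < m))
    obtain ⟨T, hT⟩ := eventually_atTop.1 (hev.and (eventually_ge_atTop (0:ℝ)))
    have hT0 : 0 ≤ T := (hT T le_rfl).2
    have hψ : MonotoneOn (fun t => a t - m / 2 * t) (Set.Ici T) := by
      have hder : ∀ x : ℝ, T ≤ x →
          HasDerivAt (fun t => a t - m / 2 * t) (R * a x * (a x - δ) * (1 - a x) - m / 2) x := by
        intro x hx
        have hid : HasDerivAt (fun t : ℝ => m / 2 * t) (m / 2) x := by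
          simpa using (hasDerivAt_id x).const_mul (m / 2)
        exact (ha x (hT0.trans hx)).sub hid
      apply monotoneOn_of_deriv_nonneg (convex_Ici T)
      · exact fun x hx => (hder x hx).continuousAt.continuousWithinAt
      · intro x hx
        rw [interior_Ici] at hx
        exact (hder x hx.le).differentiableAt.differentiableWithinAt
      · intro x hx
        rw [interior_Ici] at hx
        rw [(hder x hx.le).deriv]
        linarith [(hT x hx.le).1]
    set t1 : ℝ := T + 2 / m * (1 - a T) + 1 with ht1def
    have haT1 : a T < 1 := hlt1 T hT0
    have ht1 : T ≤ t1 := by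
      have h1 : 0 ≤ 2 / m * (1 - a T) := mul_nonneg (by positivity) (by linarith)
      simp only [ht1def]; linarith
    have hstep := hψ (Set.mem_Ici.2 (le_refl T)) (Set.mem_Ici.2 ht1) ht1
    simp only at hstep
    have hkey : m / 2 * (t1 - T) = (1 - a T) + m / 2 := by
      simp only [ht1def]; field_simp; ring
    have ha1 : a t1 < 1 := hlt1 t1 (hT0.trans ht1)
    nlinarith
  rw [← hL1]
  exact haL
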